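/- Let W_n be defined recursively by W_1 = Z₂ and W_{n+1} = W_n ≀ Z₂, and let k_n denote the number of conjugacy classes of W_n. Then k_1 = 2 and k_{n+1} = 2k_n + C(k_n, 2) = (k_n² + 3k_n)/2 for all n ≥ 1. -/

import Mathlib

/-- The swap automorphism of `G × G`. -/
def swapAut (G : Type*) [Group G] : MulAut (G × G) := MulEquiv.prodComm

lemma swapAut_sq (G : Type*) [Group G] : swapAut G * swapAut G = 1 := by
  apply MulEquiv.ext; intro x; rfl

/-- The action of `Z₂` on `G × G` by swapping coordinates:
the nontrivial element of `Z₂` acts by `(a, b) ↦ (b, a)`. -/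
def wreathAction (G : Type*) [Group G] : Multiplicative (ZMod 2) →* MulAut (G × G) :=
  AddMonoidHom.toMultiplicativeLeft
    (ZMod.lift 2 ⟨zmultiplesHom (Additive (MulAut (G × G))) (Additive.ofMul (swapAut G)), by
      show ((2 : ℤ)) • Additive.ofMul (swapAut G) = 0
      rw [show ((2:ℤ) • Additive.ofMul (swapAut G)) = Additive.ofMul (swapAut G ^ (2:ℤ)) from rfl]
      rw [show ((2:ℤ)) = ((2:ℕ) : ℤ) from rfl, zpow_natCast, pow_two, swapAut_sq]
      rfl⟩)

/-- The wreath product `G ≀ Z₂ = (G × G) ⋊ Z₂`, where the nontrivial element of `Z₂`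
acts on `G × G` by swapping the two coordinates.  An element `(a, b, z)` of the paper
is the term `⟨(a, b), z⟩`. -/
abbrev WreathZ2 (G : Type*) [Group G] :=
  SemidirectProduct (G × G) (Multiplicative (ZMod 2)) (wreathAction G)

namespace WreathAux

/-- The nontrivial element of `Multiplicative (ZMod 2)`. -/
def tt : Multiplicative (ZMod 2) := Multiplicative.ofAdd 1

lemma z2_cases : ∀ z : Multiplicative (ZMod 2), z = 1 ∨ z = tt := by decide

lemma tt_ne_one : tt ≠ (1 : Multiplicative (ZMod 2)) := by decide


lemma isConj_of_semiconj {M : Type*} [Group M] {a b c : M} (h : c * a = b * c) : IsConj a b :=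
  isConj_iff.2 ⟨c, by rw [h, mul_inv_cancel_right]⟩

lemma semiconj_of_isConj {M : Type*} [Group M] {a b : M} (h : IsConj a b) :
    ∃ c, c * a = b * c := by
  obtain ⟨c, hc⟩ := isConj_iff.1 h
  exact ⟨c, by rw [← hc, inv_mul_cancel_right]⟩

variable (G : Type*) [Group G]

lemma wA_one (p : G × G) : wreathAction G 1 p = p := by rw [map_one]; rfl

lemma wA_tt (p : G × G) : wreathAction G tt p = p.swap := rfl

/-- The classifying invariant of a conjugacy class of the wreath product. -/
noncomputable def classify (g : WreathZ2 G) : Sym2 (ConjClasses G) ⊕ ConjClasses G :=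
  if g.right = 1 then Sum.inl s(ConjClasses.mk g.left.1, ConjClasses.mk g.left.2)
  else Sum.inr (ConjClasses.mk (g.left.1 * g.left.2))

lemma classify_mk_one (a b : G) :
    classify G ⟨(a, b), 1⟩ = Sum.inl s(ConjClasses.mk a, ConjClasses.mk b) := by
  simp [classify]

lemma classify_mk_tt (a b : G) :
    classify G ⟨(a, b), tt⟩ = Sum.inr (ConjClasses.mk (a * b)) := by
  simp [classify, tt_ne_one]

lemma classify_eq_of_isConj {g g' : WreathZ2 G} (h : IsConj g g') :
    classify G g = classify G g' := by
  obtain ⟨c, hc⟩ := semiconj_of_isConj h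
  obtain ⟨⟨u, v⟩, w⟩ := c
  obtain ⟨⟨a, b⟩, z⟩ := g
  obtain ⟨⟨a', b'⟩, z'⟩ := g'
  have hr : w * z = z' * w := congrArg SemidirectProduct.right hc
  have hz : z' = z := (mul_right_cancel (show z * w = z' * w by rw [mul_comm, hr])).symm
  rw [hz] at hc ⊢
  have hl : (u, v) * wreathAction G w (a, b)
      = (a', b') * wreathAction G z (u, v) := congrArg SemidirectProduct.left hc
  rcases z2_cases z with rfl | rfl <;> rcases z2_cases w with rfl | rfl
  · -- z = 1, w = 1
    rw [wA_one, wA_one, Prod.mk_mul_mk, Prod.mk_mul_mk, Prod.mk.injEq] at hl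
    rw [classify_mk_one, classify_mk_one]
    exact congrArg _ (Sym2.eq_iff.2 (Or.inl
      ⟨ConjClasses.mk_eq_mk_iff_isConj.2 (isConj_of_semiconj hl.1),
       ConjClasses.mk_eq_mk_iff_isConj.2 (isConj_of_semiconj hl.2)⟩))
  · -- z = 1, w = tt
    rw [wA_tt, wA_one] at hl
    rw [show ((a,b) : G × G).swap = (b, a) from rfl, Prod.mk_mul_mk, Prod.mk_mul_mk,
      Prod.mk.injEq] at hl
    rw [classify_mk_one, classify_mk_one]
    refine congrArg _ (Sym2.eq_iff.2 (Or.inr ⟨?_, ?_⟩))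
    · exact ConjClasses.mk_eq_mk_iff_isConj.2 (isConj_of_semiconj hl.2)
    · exact ConjClasses.mk_eq_mk_iff_isConj.2 (isConj_of_semiconj hl.1)
  · -- z = tt, w = 1
    rw [wA_one, wA_tt] at hl
    rw [show ((u,v) : G × G).swap = (v, u) from rfl, Prod.mk_mul_mk, Prod.mk_mul_mk,
      Prod.mk.injEq] at hl
    rw [classify_mk_tt, classify_mk_tt]
    refine congrArg _ (ConjClasses.mk_eq_mk_iff_isConj.2 (isConj_of_semiconj (c := u) ?_))
    rw [← mul_assoc, hl.1, mul_assoc, hl.2, ← mul_assoc]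
  · -- z = tt, w = tt
    rw [wA_tt, wA_tt] at hl
    rw [show ((a,b) : G × G).swap = (b, a) from rfl,
      show ((u,v) : G × G).swap = (v, u) from rfl, Prod.mk_mul_mk, Prod.mk_mul_mk,
      Prod.mk.injEq] at hl
    rw [classify_mk_tt, classify_mk_tt]
    refine congrArg _ (ConjClasses.mk_eq_mk_iff_isConj.2
      (IsConj.trans (isConj_of_semiconj (c := b) (by rw [← mul_assoc]))
        (isConj_of_semiconj (c := u) ?_)))
    rw [← mul_assoc, hl.1, mul_assoc, hl.2, ← mul_assoc]

lemma isConj_of_classify_eq {g g' : WreathZ2 G} (h : classify G g = classify G g') :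
    IsConj g g' := by
  obtain ⟨⟨a, b⟩, z⟩ := g
  obtain ⟨⟨a', b'⟩, z'⟩ := g'
  rcases z2_cases z with rfl | rfl <;> rcases z2_cases z' with rfl | rfl
  · rw [classify_mk_one, classify_mk_one] at h
    rcases Sym2.eq_iff.1 (Sum.inl.inj h) with ⟨h1, h2⟩ | ⟨h1, h2⟩
    · obtain ⟨u, hu⟩ := semiconj_of_isConj (ConjClasses.mk_eq_mk_iff_isConj.1 h1)
      obtain ⟨v, hv⟩ := semiconj_of_isConj (ConjClasses.mk_eq_mk_iff_isConj.1 h2)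
      refine isConj_of_semiconj (c := (⟨(u, v), 1⟩ : WreathZ2 G)) (SemidirectProduct.ext ?_ rfl)
      show (u, v) * wreathAction G 1 (a, b) = (a', b') * wreathAction G 1 (u, v)
      rw [wA_one, wA_one, Prod.mk_mul_mk, Prod.mk_mul_mk, hu, hv]
    · obtain ⟨u, hu⟩ := semiconj_of_isConj (ConjClasses.mk_eq_mk_iff_isConj.1 h2)
      obtain ⟨v, hv⟩ := semiconj_of_isConj (ConjClasses.mk_eq_mk_iff_isConj.1 h1)
      refine isConj_of_semiconj (c := (⟨(u, v), tt⟩ : WreathZ2 G))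
        (SemidirectProduct.ext ?_ ?_)
      · show (u, v) * wreathAction G tt (a, b) = (a', b') * wreathAction G 1 (u, v)
        rw [wA_tt, wA_one, show ((a,b) : G×G).swap = (b,a) from rfl, Prod.mk_mul_mk,
          Prod.mk_mul_mk, hu, hv]
      · show tt * 1 = 1 * tt
        rw [mul_one, one_mul]
  · exact absurd h (by rw [classify_mk_one, classify_mk_tt]; simp)
  · exact absurd h (by rw [classify_mk_one, classify_mk_tt]; simp)
  · rw [classify_mk_tt, classify_mk_tt] at h
    obtain ⟨u, hu⟩ := semiconj_of_isConj (ConjClasses.mk_eq_mk_iff_isConj.1 (Sum.inr.inj h))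
    have step : ∀ x y : G, IsConj (⟨(x, y), tt⟩ : WreathZ2 G) ⟨(x * y, 1), tt⟩ := by
      intro x y
      refine isConj_of_semiconj (c := (⟨(1, y⁻¹), 1⟩ : WreathZ2 G))
        (SemidirectProduct.ext ?_ ?_)
      · show (1, y⁻¹) * wreathAction G 1 (x, y) = (x * y, 1) * wreathAction G tt (1, y⁻¹)
        rw [wA_one, wA_tt, show ((1,y⁻¹) : G×G).swap = (y⁻¹,(1:G)) from rfl, Prod.mk_mul_mk,
          Prod.mk_mul_mk, one_mul, inv_mul_cancel, mul_assoc, mul_inv_cancel, mul_one, mul_one]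
      · show 1 * tt = tt * 1
        rw [mul_one, one_mul]
    have mid : IsConj (⟨(a * b, 1), tt⟩ : WreathZ2 G) ⟨(a' * b', 1), tt⟩ := by
      refine isConj_of_semiconj (c := (⟨(u, u), 1⟩ : WreathZ2 G))
        (SemidirectProduct.ext ?_ ?_)
      · show (u, u) * wreathAction G 1 (a * b, 1) = (a' * b', 1) * wreathAction G tt (u, u)
        rw [wA_one, wA_tt, show ((u,u) : G×G).swap = (u,u) from rfl, Prod.mk_mul_mk,
          Prod.mk_mul_mk, hu, mul_one, one_mul]
      · show 1 * tt = tt * 1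
        rw [mul_one, one_mul]
    exact ((step a b).trans mid).trans (step a' b').symm

lemma classify_surjective : Function.Surjective (classify G) := by
  rintro (s | x)
  · induction s using Sym2.ind with
    | _ x y =>
      obtain ⟨a, rfl⟩ := ConjClasses.mk_surjective x
      obtain ⟨b, rfl⟩ := ConjClasses.mk_surjective y
      exact ⟨⟨(a, b), 1⟩, classify_mk_one G a b⟩
  · obtain ⟨a, rfl⟩ := ConjClasses.mk_surjective x
    exact ⟨⟨(a, 1), tt⟩, by rw [classify_mk_tt, mul_one]⟩

/-- The induced map on conjugacy classes. -/
noncomputable def classifyQ : ConjClasses (WreathZ2 G) → Sym2 (ConjClasses G) ⊕ ConjClasses G :=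
  Quotient.lift (classify G) fun _ _ h => classify_eq_of_isConj G h

lemma classifyQ_bijective : Function.Bijective (classifyQ G) := by
  constructor
  · intro x y
    induction x using Quotient.inductionOn with | _ g =>
    induction y using Quotient.inductionOn with | _ g' =>
    intro h
    exact Quotient.sound (isConj_of_classify_eq G h)
  · intro s
    obtain ⟨g, hg⟩ := classify_surjective G s
    exact ⟨⟦g⟧, hg⟩

instance [Finite G] : Finite (WreathZ2 G) :=
  Finite.of_injective (fun g => (g.left, g.right))
    (fun x y h => SemidirectProduct.ext (congrArg Prod.fst h) (congrArg Prod.snd h))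

theorem card_conjClasses_wreath [Finite G] :
    Nat.card (ConjClasses (WreathZ2 G)) =
      2 * Nat.card (ConjClasses G) + (Nat.card (ConjClasses G)).choose 2 := by
  have h1 : Finite (ConjClasses G) := Quotient.finite _
  have h2 : Finite (ConjClasses (WreathZ2 G)) := Quotient.finite _
  have := Fintype.ofFinite (ConjClasses G)
  classical
  rw [Nat.card_eq_of_bijective _ (classifyQ_bijective G), Nat.card_sum,
    Nat.card_eq_fintype_card (α := Sym2 (ConjClasses G)), Sym2.card,
    Nat.card_eq_fintype_card (α := ConjClasses G)]
  set k := Fintype.card (ConjClasses G)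
  rw [show k + 1 = k.succ from rfl, Nat.choose_succ_succ, Nat.choose_one_right]
  ring

end WreathAux

/-- The iterated wreath product: `IterWreath 0 = W₁ = Z₂` and
`IterWreath (n+1) = W_{n+2} = W_{n+1} ≀ Z₂`, so `IterWreath n` is the group `W_{n+1}`
of the paper. -/
def IterWreath : ℕ → GrpCat
  | 0 => GrpCat.of (Multiplicative (ZMod 2))
  | (n + 1) => GrpCat.of (WreathZ2 (IterWreath n))

/-- `k_n`, the number of conjugacy classes of `W_n = IterWreath (n - 1)`
(equivalently, its number of irreducible complex representations). -/
noncomputable def kSeq (n : ℕ) : ℕ := Nat.card (ConjClasses (IterWreath (n - 1)))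

open WreathAux in
lemma finite_iterWreath : ∀ n, Finite (IterWreath n)
  | 0 => (inferInstance : Finite (Multiplicative (ZMod 2)))
  | (n + 1) => by
      have := finite_iterWreath n
      exact (inferInstance : Finite (WreathZ2 (IterWreath n)))

open WreathAux in

/-- `k₁ = 2` and `k_{n+1} = 2 k_n + C(k_n, 2)` for all `n ≥ 1`. -/
theorem kSeq_one_and_recurrence :
    kSeq 1 = 2 ∧ ∀ n : ℕ, 1 ≤ n → kSeq (n + 1) = 2 * kSeq n + (kSeq n).choose 2 := by
  constructor
  · show Nat.card (ConjClasses (Multiplicative (ZMod 2))) = 2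
    rw [← Nat.card_congr (ConjClasses.mkEquiv (α := Multiplicative (ZMod 2)))]
    simp [Nat.card_eq_fintype_card]
  · intro n hn
    obtain ⟨m, rfl⟩ : ∃ m, n = m + 1 := ⟨n - 1, (Nat.succ_pred_eq_of_pos hn).symm⟩
    show Nat.card (ConjClasses (WreathZ2 (IterWreath m))) =
      2 * Nat.card (ConjClasses (IterWreath m)) +
        (Nat.card (ConjClasses (IterWreath m))).choose 2
    have := finite_iterWreath m
    exact card_conjClasses_wreath (IterWreath m)
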